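/- For all real β ≥ 1, δ > 0 and integers k ≥ 3 and n ≥ k+1: Σ_{j=⌊n^β⌋}^{⌊(n+1)^β⌋−1} 1/(j − ⌊(n−k)^β⌋)^{1+δ} ≤ 6 · 2^β · 4^δ · β · δ^{−1} / k^{δβ+1}. -/

import Mathlib

lemma bern_up {x β : ℝ} (hx : 1 ≤ x) (hβ : 1 ≤ β) :
    (x + 1) ^ β - x ^ β ≤ β * (x + 1) ^ (β - 1) := by
  have hx1 : (0:ℝ) < x + 1 := by linarith
  have hs : (-1:ℝ) ≤ -1 / (x + 1) := by
    rw [neg_div]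
    have h1 : 1 / (x + 1) ≤ 1 := by rw [div_le_one hx1]; linarith
    linarith
  have h := one_add_mul_self_le_rpow_one_add hs hβ
  have he : (1 + -1 / (x + 1)) = x / (x + 1) := by field_simp; ring
  rw [he, Real.div_rpow (by linarith) hx1.le] at h
  have hp : (0:ℝ) < (x + 1) ^ β := Real.rpow_pos_of_pos hx1 β
  have h3 := mul_le_mul_of_nonneg_right h hp.le
  rw [div_mul_cancel₀ _ (ne_of_gt hp)] at h3
  have h4 : (x + 1) ^ (β - 1) = (x + 1) ^ β / (x + 1) :=
    Real.rpow_sub_one (ne_of_gt hx1) β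
  rw [h4]
  have h5 : (1 + β * (-1 / (x + 1))) * (x + 1) ^ β
      = (x + 1) ^ β - β * ((x + 1) ^ β / (x + 1)) := by
    field_simp; ring
  linarith [h5 ▸ h3]

lemma delta_le (δ : ℝ) (hδ : 0 < δ) : δ ≤ 4 * (8/3 : ℝ) ^ δ := by
  have h2 : (2:ℝ) ^ δ ≤ (8/3 : ℝ) ^ δ :=
    Real.rpow_le_rpow (by norm_num) (by norm_num) hδ.le
  have hexp : Real.log 2 * δ + 1 ≤ Real.exp (Real.log 2 * δ) := Real.add_one_le_exp _
  have h2d : (2:ℝ) ^ δ = Real.exp (Real.log 2 * δ) := by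
    rw [Real.rpow_def_of_pos (by norm_num)]
  have hl2 : (0.6931471803 : ℝ) < Real.log 2 := Real.log_two_gt_d9
  nlinarith

set_option maxHeartbeats 1000000 in
/-- **Lemma (block sum bound).** For `β ≥ 1`, `δ > 0` and integers `k ≥ 3`, `n ≥ k + 1`:
`Σ_{j=⌊n^β⌋}^{⌊(n+1)^β⌋−1} (j − ⌊(n−k)^β⌋)^{−(1+δ)} ≤ 6 · 2^β · 4^δ · β · δ⁻¹ / k^{δβ+1}`. -/
theorem block_sum_bound (β δ : ℝ) (hβ : 1 ≤ β) (hδ : 0 < δ) (k n : ℕ) (hk : 3 ≤ k)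
    (hn : k + 1 ≤ n) :
    ∑ j ∈ Finset.Ico ⌊(n : ℝ) ^ β⌋₊ ⌊((n : ℝ) + 1) ^ β⌋₊,
        (1 : ℝ) / ((j : ℝ) - (⌊((n : ℝ) - (k : ℝ)) ^ β⌋₊ : ℝ)) ^ (1 + δ)
      ≤ 6 * 2 ^ β * 4 ^ δ * β * δ⁻¹ / (k : ℝ) ^ (δ * β + 1) := by
  set X : ℝ := (n : ℝ) with hXdef
  set K : ℝ := (k : ℝ) with hKdef
  have hK3 : (3:ℝ) ≤ K := by rw [hKdef]; exact_mod_cast hk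
  have hK0 : (0:ℝ) < K := by linarith
  have hXK : K + 1 ≤ X := by rw [hXdef, hKdef]; exact_mod_cast hn
  have hX1 : (1:ℝ) ≤ X := by linarith
  have hX0 : (0:ℝ) < X := by linarith
  have hy1 : (1:ℝ) ≤ X - K := by linarith
  have hβ0 : (0:ℝ) ≤ β - 1 := by linarith
  have hβp : (0:ℝ) < β := by linarith
  have hXb1 : (1:ℝ) ≤ X ^ (β - 1) := Real.one_le_rpow hX1 hβ0
  have hXbpos : (0:ℝ) < X ^ (β - 1) := by linarith
  have hKX1 : (3:ℝ) ≤ K * X ^ (β - 1) := by nlinarith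
  set c : ℝ := 2/3 * (K * X ^ (β - 1)) with hcdef
  have hc0 : (0:ℝ) < c := by rw [hcdef]; nlinarith
  set m := ⌊X ^ β⌋₊ with hmdef
  set M := ⌊(X + 1) ^ β⌋₊ with hMdef
  set a := ⌊(X - K) ^ β⌋₊ with hadef
  have h2pos : (0:ℝ) < (2:ℝ) ^ β := Real.rpow_pos_of_pos (by norm_num) β
  have h4pos : (0:ℝ) < (4:ℝ) ^ δ := Real.rpow_pos_of_pos (by norm_num) δ
  have hKp : (0:ℝ) < K ^ (δ * β + 1) := Real.rpow_pos_of_pos hK0 _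
  have hRHSpos : (0:ℝ) < 6 * 2 ^ β * 4 ^ δ * β * δ⁻¹ / K ^ (δ * β + 1) :=
    div_pos (mul_pos (mul_pos (mul_pos (mul_pos (by norm_num) h2pos) h4pos) hβp)
      (inv_pos.2 hδ)) hKp
  rcases le_or_gt M m with hMm | hmM
  · rw [Finset.Ico_eq_empty (not_lt.2 hMm), Finset.sum_empty]
    exact hRHSpos.le
  have hgap : K * X ^ (β - 1) ≤ X ^ β - (X - K) ^ β := by
    have h1 : (X - K) ^ β = (X - K) ^ (β - 1) * (X - K) := by
      rw [← Real.rpow_add_one (by linarith : X - K ≠ 0) (β - 1),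
        show β - 1 + 1 = β by ring]
    have h2 : (X - K) ^ (β - 1) ≤ X ^ (β - 1) :=
      Real.rpow_le_rpow (by linarith) (by linarith) hβ0
    have h3 : X ^ β = X ^ (β - 1) * X := by
      rw [← Real.rpow_add_one hX0.ne' (β - 1), show β - 1 + 1 = β by ring]
    rw [h1, h3]
    nlinarith
  have hmlow : X ^ β - 1 < (m : ℝ) := Nat.sub_one_lt_floor _
  have haup : (a : ℝ) ≤ (X - K) ^ β := Nat.floor_le (Real.rpow_nonneg (by linarith) β)
  have hterm : ∀ j ∈ Finset.Ico m M,
      (1:ℝ) / ((j : ℝ) - (a : ℝ)) ^ (1 + δ) ≤ 1 / c ^ (1 + δ) := by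
    intro j hj
    have hjm : (m : ℝ) ≤ (j : ℝ) := Nat.cast_le.2 (Finset.mem_Ico.1 hj).1
    have hcj : c ≤ (j : ℝ) - (a : ℝ) := by
      rw [hcdef]; linarith
    have hr := Real.rpow_le_rpow hc0.le hcj (by linarith : (0:ℝ) ≤ 1 + δ)
    exact one_div_le_one_div_of_le (Real.rpow_pos_of_pos hc0 _) hr
  have hMup : (M : ℝ) ≤ (X + 1) ^ β := Nat.floor_le (Real.rpow_nonneg (by linarith) β)
  have hbern : (X + 1) ^ β - X ^ β ≤ β * (X + 1) ^ (β - 1) := bern_up hX1 hβ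
  have hb1 : (1:ℝ) ≤ β * (X + 1) ^ (β - 1) := by
    have := Real.one_le_rpow (by linarith : (1:ℝ) ≤ X + 1) hβ0
    nlinarith
  have hcard : ((M - m : ℕ) : ℝ) ≤ 2 * β * (X + 1) ^ (β - 1) := by
    rw [Nat.cast_sub hmM.le]
    linarith
  have hcp : (0:ℝ) < c ^ (1 + δ) := Real.rpow_pos_of_pos hc0 _
  have hXp1pos : (0:ℝ) < (X + 1) ^ (β - 1) := Real.rpow_pos_of_pos (by linarith) _
  have hsum : ∑ j ∈ Finset.Ico m M, (1:ℝ) / ((j : ℝ) - (a : ℝ)) ^ (1 + δ)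
      ≤ 2 * β * (X + 1) ^ (β - 1) / c ^ (1 + δ) := by
    calc ∑ j ∈ Finset.Ico m M, (1:ℝ) / ((j : ℝ) - (a : ℝ)) ^ (1 + δ)
        ≤ ∑ _j ∈ Finset.Ico m M, 1 / c ^ (1 + δ) := Finset.sum_le_sum hterm
      _ = ((M - m : ℕ) : ℝ) * (1 / c ^ (1 + δ)) := by
          rw [Finset.sum_const, Nat.card_Ico, nsmul_eq_mul]
      _ ≤ 2 * β * (X + 1) ^ (β - 1) * (1 / c ^ (1 + δ)) := by
          apply mul_le_mul_of_nonneg_right hcard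
          positivity
      _ = 2 * β * (X + 1) ^ (β - 1) / c ^ (1 + δ) := by rw [mul_one_div]
  refine hsum.trans ?_
  rw [div_le_div_iff₀ hcp hKp]
  have hc_expand : c ^ (1 + δ)
      = (2/3 : ℝ) ^ (1 + δ) * (K ^ (1 + δ) * X ^ ((β - 1) * (1 + δ))) := by
    rw [hcdef, Real.mul_rpow (by norm_num) (by positivity),
      Real.mul_rpow hK0.le (by positivity), ← Real.rpow_mul hX0.le]
  have hXpow : X ^ ((β - 1) * (1 + δ)) = X ^ (β - 1) * X ^ ((β - 1) * δ) := by
    rw [show (β - 1) * (1 + δ) = (β - 1) + (β - 1) * δ by ring, Real.rpow_add hX0]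
  have hKpow : K ^ (δ * β + 1) = K ^ (1 + δ) * K ^ ((β - 1) * δ) := by
    rw [show δ * β + 1 = (1 + δ) + (β - 1) * δ by ring, Real.rpow_add hK0]
  have hKXpow : K ^ ((β - 1) * δ) ≤ X ^ ((β - 1) * δ) :=
    Real.rpow_le_rpow hK0.le (by linarith) (by positivity)
  have hX21 : (X + 1) ^ (β - 1) ≤ 2 ^ (β - 1) * X ^ (β - 1) := by
    calc (X + 1) ^ (β - 1) ≤ (2 * X) ^ (β - 1) :=
          Real.rpow_le_rpow (by linarith) (by linarith) hβ0
      _ = 2 ^ (β - 1) * X ^ (β - 1) := Real.mul_rpow (by norm_num) hX0.le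
  have h2b : (2:ℝ) ^ β = 2 * 2 ^ (β - 1) := by
    nth_rewrite 1 [show β = 1 + (β - 1) by ring]
    rw [Real.rpow_add (by norm_num), Real.rpow_one]
  have h23pos : (0:ℝ) < (2/3 : ℝ) ^ (1 + δ) := Real.rpow_pos_of_pos (by norm_num) _
  have hK1dpos : (0:ℝ) < K ^ (1 + δ) := Real.rpow_pos_of_pos hK0 _
  have hconst : (1:ℝ) ≤ 6 * 4 ^ δ * δ⁻¹ * (2/3 : ℝ) ^ (1 + δ) := by
    have hmul : (4:ℝ) ^ δ * (2/3 : ℝ) ^ δ = (8/3 : ℝ) ^ δ := by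
      rw [← Real.mul_rpow (by norm_num) (by norm_num)]; norm_num
    have h23 : (2/3 : ℝ) ^ (1 + δ) = 2/3 * (2/3 : ℝ) ^ δ := by
      rw [Real.rpow_add (by norm_num), Real.rpow_one]
    have heq : 6 * (4:ℝ) ^ δ * δ⁻¹ * (2/3 * (2/3 : ℝ) ^ δ) = 4 * ((4:ℝ) ^ δ * (2/3:ℝ) ^ δ) * δ⁻¹ := by
      ring
    rw [h23, heq, hmul, ← div_eq_mul_inv, le_div_iff₀ hδ, one_mul]
    exact delta_le δ hδ
  calc 2 * β * (X + 1) ^ (β - 1) * K ^ (δ * β + 1)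
      ≤ 2 * β * (2 ^ (β - 1) * X ^ (β - 1)) * K ^ (δ * β + 1) := by
        apply mul_le_mul_of_nonneg_right _ hKp.le
        exact mul_le_mul_of_nonneg_left hX21 (by linarith)
    _ = 1 * (2 ^ β * β * X ^ (β - 1) * K ^ (δ * β + 1)) := by rw [h2b]; ring
    _ ≤ (6 * 4 ^ δ * δ⁻¹ * (2/3 : ℝ) ^ (1 + δ)) * (2 ^ β * β * X ^ (β - 1) * K ^ (δ * β + 1)) := by
        exact mul_le_mul_of_nonneg_right hconst
          (mul_nonneg (mul_nonneg (mul_nonneg h2pos.le hβp.le) hXbpos.le) hKp.le)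
    _ = 6 * 2 ^ β * 4 ^ δ * β * δ⁻¹ *
        ((2/3 : ℝ) ^ (1 + δ) * (K ^ (1 + δ) * (X ^ (β - 1) * K ^ ((β - 1) * δ)))) := by
        rw [hKpow]; ring
    _ ≤ 6 * 2 ^ β * 4 ^ δ * β * δ⁻¹ *
        ((2/3 : ℝ) ^ (1 + δ) * (K ^ (1 + δ) * (X ^ (β - 1) * X ^ ((β - 1) * δ)))) := by
        apply mul_le_mul_of_nonneg_left _
          (mul_nonneg (mul_nonneg (mul_nonneg (mul_nonneg (by norm_num) h2pos.le) h4pos.le)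
            hβp.le) (inv_pos.2 hδ).le)
        apply mul_le_mul_of_nonneg_left _ h23pos.le
        apply mul_le_mul_of_nonneg_left _ hK1dpos.le
        exact mul_le_mul_of_nonneg_left hKXpow hXbpos.le
    _ = 6 * 2 ^ β * 4 ^ δ * β * δ⁻¹ * c ^ (1 + δ) := by
        rw [hc_expand, hXpow]
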